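/- Let R be a topological ring with identity, let (A, ≤) be a directed set, and let {Iₐ}ₐ, {Jₐ}ₐ be nets of closed two-sided ideals of R converging in the hyperspace sense to closed two-sided ideals I and J respectively. If Iₐ and Jₐ are topologically co-maximal for every α, then I and J are topologically co-maximal. -/

import Mathlib

open Pointwise

/-- Topological co-maximality is a closed relation on closed two-sided ideals: if nets
`{Iₐ}`, `{Jₐ}` of closed two-sided ideals (indexed by a directed set) converge in the
hyperspace sense to closed two-sided ideals `I` and `J` respectively, and `Iₐ ⊥ Jₐ` for all
`α`, then `I ⊥ J`. -/
theorem tcm_closed_relation {R : Type*} [Ring R] [TopologicalSpace R] [IsTopologicalRing R]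
    [T2Space R] {A : Type*} [Preorder A] [Nonempty A]
    (hdir : ∀ a b : A, ∃ c, a ≤ c ∧ b ≤ c)
    (Inet Jnet : A → TwoSidedIdeal R) (I J : TwoSidedIdeal R)
    (hInetC : ∀ a, IsClosed (Inet a : Set R)) (hJnetC : ∀ a, IsClosed (Jnet a : Set R))
    (hIC : IsClosed (I : Set R)) (hJC : IsClosed (J : Set R))
    (hIconv : ∀ ε ∈ nhds (0 : R), ∃ a₀ : A, ∀ a, a₀ ≤ a →
      (I : Set R) ⊆ (Inet a : Set R) + ε ∧ (Inet a : Set R) ⊆ (I : Set R) + ε)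
    (hJconv : ∀ ε ∈ nhds (0 : R), ∃ a₀ : A, ∀ a, a₀ ≤ a →
      (J : Set R) ⊆ (Jnet a : Set R) + ε ∧ (Jnet a : Set R) ⊆ (J : Set R) + ε)
    (hTCM : ∀ a, closure ((Inet a : Set R) + (Jnet a : Set R)) = Set.univ) :
    closure ((I : Set R) + (J : Set R)) = Set.univ := by
  rw [Set.eq_univ_iff_forall]
  intro x
  rw [mem_closure_iff_nhds_zero]
  intro U hU
  obtain ⟨V, hV, hVU⟩ := exists_nhds_zero_half hU
  obtain ⟨W₀, hW₀, hWV⟩ := exists_nhds_zero_half hV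
  set W : Set R := W₀ ∩ (-W₀) with hWdef
  have hW : W ∈ nhds (0 : R) := by
    refine Filter.inter_mem hW₀ ?_
    simpa using neg_mem_nhds_zero R hW₀
  have hWsym : ∀ w ∈ W, -w ∈ W := by
    intro w hw
    exact ⟨by simpa using hw.2, by simpa using hw.1⟩
  have hWW₀ : W ⊆ W₀ := Set.inter_subset_left
  have h0V : (0 : R) ∈ V := mem_of_mem_nhds hV
  have hWsubV : W ⊆ V := fun w hw => by
    simpa using hWV w (hWW₀ hw) 0 (mem_of_mem_nhds hW₀)
  obtain ⟨a₁, ha₁⟩ := hIconv W hW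
  obtain ⟨a₂, ha₂⟩ := hJconv W hW
  obtain ⟨c, hc₁, hc₂⟩ := hdir a₁ a₂
  have hIc : (Inet c : Set R) ⊆ (I : Set R) + W := (ha₁ c hc₁).2
  have hJc : (Jnet c : Set R) ⊆ (J : Set R) + W := (ha₂ c hc₂).2
  have hx : x ∈ closure ((Inet c : Set R) + (Jnet c : Set R)) := by
    rw [hTCM c]; trivial
  rw [mem_closure_iff_nhds_zero] at hx
  obtain ⟨y, hy, hyx⟩ := hx W hW
  obtain ⟨i, hi, j, hj, hij⟩ := hy
  obtain ⟨i₀, hi₀, w₁, hw₁, hiw⟩ := hIc hi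
  obtain ⟨j₀, hj₀, w₂, hw₂, hjw⟩ := hJc hj
  refine ⟨i₀ + j₀, ⟨i₀, hi₀, j₀, hj₀, rfl⟩, ?_⟩
  have key : i₀ + j₀ - x = ((y - x) + -w₁) + -w₂ := by
    rw [← hij, ← hiw, ← hjw]; beta_reduce; abel
  rw [key]
  exact hVU _ (hWV _ (hWW₀ hyx) _ (hWW₀ (hWsym _ hw₁))) _ (hWsubV (hWsym _ hw₂))
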